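/- Let R be a commutative ring, A a commutative R-algebra, and M an R-submodule of A. Then the following two conditions are equivalent: (1) for all a, b ∈ A, if a^m ∈ M for all sufficiently large m, then a^m b ∈ M for all sufficiently large m; (2) for all a, b ∈ A, if a^m ∈ M for all m ≥ 1, then a^m b ∈ M for all sufficiently large m. (In the definition of a Mathieu subspace, the hypothesis 'a^m ∈ M for m >> 0' may equivalently be replaced by 'a^m ∈ M for all m ≥ 1'.) -/
import Mathlib


/-- In the definition of a Mathieu subspace, the hypothesis
`a^m ∈ M` for all sufficiently large `m` may equivalently be replaced by
`a^m ∈ M` for all `m ≥ 1`. -/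
theorem mathieuSubspace_def_iff
    (R : Type*) (A : Type*) [CommRing R] [CommRing A] [Algebra R A]
    (M : Submodule R A) :
    (∀ a b : A, (∃ N : ℕ, ∀ m : ℕ, N ≤ m → a ^ m ∈ M) →
        (∃ N : ℕ, ∀ m : ℕ, N ≤ m → a ^ m * b ∈ M)) ↔
    (∀ a b : A, (∀ m : ℕ, 1 ≤ m → a ^ m ∈ M) →
        (∃ N : ℕ, ∀ m : ℕ, N ≤ m → a ^ m * b ∈ M)) := by
  constructor
  · intro h a b hab
    exact h a b ⟨1, hab⟩
  · rintro h a b ⟨N, hN⟩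
    set N' := max N 1 with hN'def
    have hN'1 : 1 ≤ N' := le_max_right _ _
    have key : ∀ j : ℕ, ∃ K : ℕ, ∀ m, K ≤ m → (a ^ N') ^ m * (a ^ j * b) ∈ M := by
      intro j
      apply h
      intro m hm
      rw [← pow_mul]
      apply hN
      calc N ≤ N' := le_max_left _ _
        _ = N' * 1 := (mul_one _).symm
        _ ≤ N' * m := Nat.mul_le_mul_left _ hm
    choose K hK using key
    refine ⟨N' * ((Finset.range N').sup K + 1), fun m hm => ?_⟩
    have hj : m % N' < N' := Nat.mod_lt _ hN'1
    have hq : (Finset.range N').sup K ≤ m / N' := by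
      have h2 := Nat.div_le_div_right (c := N') hm
      rw [Nat.mul_div_cancel_left _ hN'1] at h2; omega
      -- h2 : sup K + 1 ≤ m / N', weaken:
    have hmem := hK (m % N') (m / N')
      (le_trans (Finset.le_sup (Finset.mem_range.mpr hj)) hq)
    rw [← pow_mul, ← mul_assoc, ← pow_add, Nat.div_add_mod] at hmem
    exact hmem
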